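/- Let M : Matrix (Fin (n+1)) (Fin (n+1)) ℝ be diagonal with strictly positive diagonal entries. Then: (i) Sᵀ * M⁻¹ * S is positive definite (in particular invertible); and (ii) with S⁺ = (Sᵀ * M⁻¹ * S)⁻¹ * Sᵀ * M⁻¹ and σ = 𝟙ᵀ M 𝟙, the (n+1)×(n+1) matrix U whose first column is σ⁻¹ • 𝟙 and whose remaining n columns are the columns of M⁻¹ * S is invertible, with inverse V given by stacking the row vector 𝟙ᵀ M on top of the n×(n+1) matrix S⁺ * M; that is, V * U = 1 and U * V = 1. -/

import Mathlib

open Matrix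

/-- For `S = [-Iₙ; 𝟙ₙᵀ]` and a positive diagonal matrix `M`:
(i) `Sᵀ M⁻¹ S` is positive definite; (ii) the matrix `U = [σ⁻¹𝟙, M⁻¹S]` is invertible
with inverse `V = [𝟙ᵀM; S⁺M]`, where `S⁺ = (Sᵀ M⁻¹ S)⁻¹ Sᵀ M⁻¹` and `σ = 𝟙ᵀ M 𝟙`. -/
theorem S_grammian_posDef_and_U_V_inverse
    (n : ℕ) (d : Fin (n + 1) → ℝ) (hd : ∀ i, 0 < d i)
    (M : Matrix (Fin (n + 1)) (Fin (n + 1)) ℝ) (hM : M = Matrix.diagonal d)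
    (S : Matrix (Fin (n + 1)) (Fin n) ℝ)
    (hS : ∀ i j, S i j =
      if (i : ℕ) = (j : ℕ) then -1 else if (i : ℕ) = n then 1 else 0)
    (Sp : Matrix (Fin n) (Fin (n + 1)) ℝ)
    (hSp : Sp = (Sᵀ * M⁻¹ * S)⁻¹ * Sᵀ * M⁻¹)
    (σ : ℝ) (hσ : σ = dotProduct (fun _ => 1) (M.mulVec (fun _ => 1)))
    (U : Matrix (Fin (n + 1)) (Fin 1 ⊕ Fin n) ℝ)
    (hU : U = Matrix.fromCols (Matrix.of fun _ _ => σ⁻¹) (M⁻¹ * S))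
    (V : Matrix (Fin 1 ⊕ Fin n) (Fin (n + 1)) ℝ)
    (hV : V = Matrix.fromRows (Matrix.of fun _ j => Matrix.vecMul (fun _ => 1) M j) (Sp * M)) :
    (Sᵀ * M⁻¹ * S).PosDef ∧ V * U = 1 ∧ U * V = 1 := by
  -- column sums of S vanish
  have hcol : ∀ j, ∑ i, S i j = 0 := by
    intro j
    have h : ∀ i : Fin (n+1), S i j =
        (if i = Fin.castSucc j then -1 else 0) + (if i = Fin.last n then 1 else 0) := by
      intro i
      rw [hS]
      rcases eq_or_ne i (Fin.castSucc j) with h | h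
      · subst h
        simp [Fin.ext_iff, (j.isLt.ne : (j:ℕ) ≠ n)]
      · rcases eq_or_ne i (Fin.last n) with h2 | h2
        · subst h2
          simp [Fin.ext_iff, h, (j.isLt.ne' : n ≠ (j:ℕ))] at h ⊢
        · have h1 : (i:ℕ) ≠ (j:ℕ) := by
            simpa [Fin.ext_iff] using fun hh => h (by ext; simp [hh])
          have h3 : (i:ℕ) ≠ n := by simpa [Fin.ext_iff] using h2
          simp [h1, h3, h, h2]
    simp [h, Finset.sum_add_distrib]
  have hones : Matrix.vecMul (fun _ => (1:ℝ)) S = 0 := by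
    funext j
    simpa [Matrix.vecMul, dotProduct] using hcol j
  -- inverse of M
  have hMinv : M⁻¹ = Matrix.diagonal (fun i => (d i)⁻¹) := by
    rw [hM]
    refine Matrix.inv_eq_right_inv ?_
    rw [Matrix.diagonal_mul_diagonal]
    convert Matrix.diagonal_one
    simp [mul_inv_cancel₀ (hd _).ne']
  have hMdet : IsUnit M.det := by
    rw [hM, Matrix.det_diagonal]
    exact isUnit_iff_ne_zero.mpr (Finset.prod_pos (fun i _ => hd i)).ne'
  have hMMinv : M * M⁻¹ = 1 := Matrix.mul_nonsing_inv M hMdet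
  have hMinvM : M⁻¹ * M = 1 := Matrix.nonsing_inv_mul M hMdet
  have hMinvPD : (M⁻¹).PosDef := by
    rw [hMinv]
    exact Matrix.PosDef.diagonal fun i => inv_pos.mpr (hd i)
  -- S *ᵥ x ≠ 0 for x ≠ 0
  have hSmv : ∀ x : Fin n → ℝ, x ≠ 0 → S *ᵥ x ≠ 0 := by
    intro x hx h0
    obtain ⟨j, hj⟩ := Function.ne_iff.mp hx
    apply hj
    have hval : (S *ᵥ x) (Fin.castSucc j) = -x j := by
      simp only [Matrix.mulVec, dotProduct, hS, Fin.coe_castSucc]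
      rw [Finset.sum_eq_single j]
      · simp
      · intro k _ hk
        have : (j:ℕ) ≠ (k:ℕ) := fun hh => hk (Fin.ext hh.symm)
        simp [this, (j.isLt.ne : (j:ℕ) ≠ n)]
      · simp
    rw [h0] at hval
    simpa using hval.symm
  -- positive definiteness of the Gram matrix
  have hG : (Sᵀ * M⁻¹ * S).PosDef := by
    refine Matrix.PosDef.of_dotProduct_mulVec_pos ?_ ?_
    · have hH : (M⁻¹).IsHermitian := hMinvPD.isHermitian
      have hST : Sᴴ = Sᵀ := by ext i j; simp [Matrix.conjTranspose_apply]
      have := Matrix.isHermitian_conjTranspose_mul_mul S hH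
      rwa [hST] at this
    · intro x hx
      have hx' : S *ᵥ x ≠ 0 := hSmv x hx
      have key : star x ⬝ᵥ ((Sᵀ * M⁻¹ * S) *ᵥ x)
          = star (S *ᵥ x) ⬝ᵥ (M⁻¹ *ᵥ (S *ᵥ x)) := by
        rw [star_trivial, star_trivial, ← Matrix.mulVec_mulVec, ← Matrix.mulVec_mulVec,
          dotProduct_mulVec, Matrix.vecMul_transpose]
      rw [key]
      exact hMinvPD.dotProduct_mulVec_pos hx'
  refine ⟨hG, ?_⟩
  -- invertibility of the Gram matrix
  have hGdet : IsUnit (Sᵀ * M⁻¹ * S).det := isUnit_iff_ne_zero.mpr hG.det_pos.ne'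
  have hGinv : (Sᵀ * M⁻¹ * S)⁻¹ * (Sᵀ * M⁻¹ * S) = 1 := Matrix.nonsing_inv_mul _ hGdet
  -- σ is positive
  have hσval : σ = ∑ i, d i := by
    rw [hσ, hM]
    simp [dotProduct, Matrix.mulVec_diagonal]
  have hσpos : 0 < σ := by
    rw [hσval]
    exact Finset.sum_pos (fun i _ => hd i) Finset.univ_nonempty
  -- block computations
  set G := Sᵀ * M⁻¹ * S with hGdef
  have hb11 : (Matrix.of fun _ j => Matrix.vecMul (fun _ => (1:ℝ)) M j : Matrix (Fin 1) (Fin (n+1)) ℝ)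
      * (Matrix.of fun _ _ => σ⁻¹ : Matrix (Fin (n+1)) (Fin 1) ℝ) = 1 := by
    ext i k
    fin_cases i; fin_cases k
    simp only [Matrix.mul_apply, Matrix.of_apply]
    rw [← Finset.sum_mul]
    have hsum : ∑ k', Matrix.vecMul (fun _ => (1:ℝ)) M k' = σ := by
      rw [hσ, dotProduct_mulVec]
      simp [dotProduct]
    rw [hsum, mul_inv_cancel₀ hσpos.ne']
    simp [Matrix.one_apply]
  have hrowmul : ∀ (v : Fin (n+1) → ℝ) (B : Matrix (Fin (n+1)) (Fin n) ℝ),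
      (Matrix.of fun (_ : Fin 1) j => v j) * B = Matrix.of fun _ j => Matrix.vecMul v B j := by
    intro v B
    ext i j
    simp [Matrix.mul_apply, Matrix.vecMul, dotProduct]
  have hb12 : (Matrix.of fun _ j => Matrix.vecMul (fun _ => (1:ℝ)) M j : Matrix (Fin 1) (Fin (n+1)) ℝ) * (M⁻¹ * S) = 0 := by
    have hv : Matrix.vecMul (Matrix.vecMul (fun _ => (1:ℝ)) M) (M⁻¹ * S) = 0 := by
      rw [Matrix.vecMul_vecMul, ← Matrix.mul_assoc, hMMinv, Matrix.one_mul, hones]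
    rw [hrowmul, hv]
    ext i j
    simp
  have hSpM : Sp * M = G⁻¹ * Sᵀ := by
    rw [hSp, Matrix.mul_assoc (G⁻¹ * Sᵀ), hMinvM, Matrix.mul_one]
  have hStC : Sᵀ * (Matrix.of fun _ _ => σ⁻¹ : Matrix (Fin (n+1)) (Fin 1) ℝ) = 0 := by
    ext k i
    simp only [Matrix.mul_apply, Matrix.of_apply, Matrix.transpose_apply, Matrix.zero_apply]
    rw [← Finset.sum_mul, hcol, zero_mul]
  have hb21 : Sp * M * (Matrix.of fun _ _ => σ⁻¹ : Matrix (Fin (n+1)) (Fin 1) ℝ) = 0 := by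
    rw [hSpM, Matrix.mul_assoc, hStC, Matrix.mul_zero]
  have hb22 : Sp * M * (M⁻¹ * S) = 1 := by
    rw [hSpM, Matrix.mul_assoc, ← Matrix.mul_assoc Sᵀ M⁻¹ S, ← hGdef, hGinv]
  have hVU : V * U = 1 := by
    rw [hV, hU, Matrix.fromRows_mul_fromCols, hb11, hb12, hb21, hb22,
      Matrix.fromBlocks_one]
  exact ⟨hVU, (Matrix.mul_eq_one_comm_of_equiv
    (finSumFinEquiv.trans (finCongr (by omega)))).mp hVU⟩
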